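/- arXiv:2112.04716 — 3 statements merged into one kernel-verified Lean document; each statement's English description precedes it below -/
import Mathlib

section
/- (Proposition 2, eigenvalue form) Let n, d be positive natural numbers, let φ i, φ' i ∈ ℝ^d (i = 1,…,n), let Φ and Φ' be the n×d real matrices whose i-th rows are φ i and φ' i, and let 0 < γ ≤ 1. If ∑_{i=1}^n ⟨φ i, φ' i⟩ ≥ (1/γ) ∑_{i=1}^n ‖φ i‖², then the characteristic polynomial of the complexification of the d×d matrix M := Φᵀ(Φ − γΦ') has a root λ ∈ ℂ with Re(λ) ≤ 0. -/
open scoped RealInnerProductSpace Matrix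

theorem stmt_2 (n d : ℕ) (hn : 0 < n) (hd : 0 < d)
    (φ φ' : Fin n → EuclideanSpace ℝ (Fin d)) (γ : ℝ) (hγ0 : 0 < γ) (hγ1 : γ ≤ 1)
    (h : (1 / γ) * ∑ i : Fin n, ‖φ i‖ ^ 2 ≤ ∑ i : Fin n, ⟪φ i, φ' i⟫) :
    ∃ z : ℂ,
      ((((Matrix.of fun i j => φ i j)ᵀ *
          (Matrix.of (fun i j => φ i j) -
            γ • Matrix.of fun i j => φ' i j)).map (algebraMap ℝ ℂ)).charpoly).IsRoot z ∧
      z.re ≤ 0 := by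
  classical
  set M : Matrix (Fin d) (Fin d) ℝ :=
    (Matrix.of fun i j => φ i j)ᵀ *
      (Matrix.of (fun i j => φ i j) - γ • Matrix.of fun i j => φ' i j) with hM
  set Mc : Matrix (Fin d) (Fin d) ℂ := M.map (algebraMap ℝ ℂ) with hMc
  -- trace of M
  have htraceM : M.trace = ∑ i : Fin n, (‖φ i‖ ^ 2 - γ * ⟪φ i, φ' i⟫) := by
    have : M.trace = ∑ j : Fin d, ∑ i : Fin n,
        φ i j * (φ i j - γ * φ' i j) := by
      simp [hM, Matrix.trace, Matrix.diag, Matrix.mul_apply, Matrix.transpose_apply,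
        Matrix.sub_apply, Matrix.smul_apply, smul_eq_mul]
    rw [this, Finset.sum_comm]
    refine Finset.sum_congr rfl fun i _ => ?_
    have hnorm : ‖φ i‖ ^ 2 = ∑ j : Fin d, φ i j * φ i j := by
      rw [← real_inner_self_eq_norm_sq, PiLp.inner_apply]
      exact Finset.sum_congr rfl fun j _ => by simp [mul_comm, sq]
    have hinner : ⟪φ i, φ' i⟫ = ∑ j : Fin d, φ i j * φ' i j := by
      simp [PiLp.inner_apply, mul_comm]
    rw [hnorm, hinner, Finset.mul_sum, ← Finset.sum_sub_distrib]
    exact Finset.sum_congr rfl fun j _ => by ring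
  have htrace_le : M.trace ≤ 0 := by
    rw [htraceM, Finset.sum_sub_distrib]
    have h2 : ∑ i : Fin n, ‖φ i‖ ^ 2 ≤ γ * ∑ i : Fin n, ⟪φ i, φ' i⟫ := by
      have := mul_le_mul_of_nonneg_left h (le_of_lt hγ0)
      rwa [← mul_assoc, mul_one_div, div_self (ne_of_gt hγ0), one_mul] at this
    rw [Finset.mul_sum] at h2
    linarith
  -- trace of Mc
  have htraceMc : Mc.trace = (M.trace : ℂ) := by
    simp [hMc, Matrix.trace, Matrix.diag, Matrix.map_apply]
  have hsum : Mc.trace = Mc.charpoly.roots.sum := Matrix.trace_eq_sum_roots_charpoly Mc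
  -- roots card
  have hcard : Mc.charpoly.roots.card = d := by
    rw [Polynomial.splits_iff_card_roots.mp (IsAlgClosed.splits Mc.charpoly)]
    · simp [Matrix.charpoly_natDegree_eq_dim]
  have hne : Mc.charpoly.roots ≠ 0 := by
    intro h0
    rw [h0] at hcard
    simp at hcard
    omega
  by_contra hcon
  push_neg at hcon
  have hpos : ∀ z ∈ Mc.charpoly.roots, 0 < z.re := fun z hz =>
    hcon z (Mc.charpoly.isRoot_of_mem_roots hz)
  have hsumre : Mc.trace.re = (Mc.charpoly.roots.map Complex.re).sum := by
    rw [hsum]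
    exact (map_multiset_sum Complex.reAddGroupHom _ : _)
  have h0lt : (0 : ℝ) < (Mc.charpoly.roots.map Complex.re).sum := by
    have := Multiset.sum_lt_sum_of_nonempty (s := Mc.charpoly.roots)
      (f := fun _ => (0 : ℝ)) (g := Complex.re) hne hpos
    simpa using this
  have : Mc.trace.re ≤ 0 := by rw [htraceMc]; simpa using htrace_le
  rw [hsumre] at this
  linarith
end

section
/- (Proposition 2, divergence form) Let n, d be positive natural numbers, let φ i, φ' i ∈ ℝ^d (i = 1,…,n), let Φ and Φ' be the n×d real matrices whose i-th rows are φ i and φ' i, and let 0 < γ ≤ 1. If ∑_{i=1}^n ⟨φ i, φ' i⟩ ≥ (1/γ) ∑_{i=1}^n ‖φ i‖², then for every η > 0 the powers (I − η·M_ℂ)^k of the complexified TD iteration matrix do not converge to the zero matrix as k → ∞, where M_ℂ is the entrywise complexification of M := Φᵀ(Φ − γΦ'). In particular, the linear TD iterates w_{k+1} = (I − ηM)w_k do not converge to the TD fixed point from every initialization. -/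
open scoped RealInnerProductSpace Matrix

private lemma aux_not_tendsto {d : ℕ} (A : Matrix (Fin d) (Fin d) ℂ) (lam : ℂ)
    (hroot : A.charpoly.IsRoot lam) (hlam : 1 ≤ ‖lam‖) :
    ¬ Filter.Tendsto (fun k : ℕ => A ^ k) Filter.atTop (nhds 0) := by
  have hdet : (lam • (1 : Matrix (Fin d) (Fin d) ℂ) - A).det = 0 := by
    have := hroot
    rw [Polynomial.IsRoot, Matrix.charpoly, eval_det,
      Matrix.matPolyEquiv_charmatrix] at this
    simpa [Matrix.scalar, Matrix.smul_one_eq_diagonal, Pi.algebraMap_def] using this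
  obtain ⟨v, hv, hAv⟩ := (Matrix.exists_mulVec_eq_zero_iff).2 hdet
  have hev : A.mulVec v = lam • v := by
    have := hAv
    rw [Matrix.sub_mulVec, sub_eq_zero] at this
    rw [← this, Matrix.smul_mulVec, Matrix.one_mulVec]
  have hpow : ∀ k : ℕ, (A ^ k).mulVec v = lam ^ k • v := by
    intro k
    induction k with
    | zero => simp [Matrix.one_mulVec]
    | succ k ih =>
      rw [pow_succ', ← Matrix.mulVec_mulVec, ih, Matrix.mulVec_smul, hev,
        smul_smul, ← pow_succ]
  intro htend
  obtain ⟨j, hj⟩ := Function.ne_iff.mp hv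
  have hcont : Filter.Tendsto (fun k : ℕ => ((A ^ k).mulVec v) j) Filter.atTop (nhds 0) := by
    have : Filter.Tendsto (fun k : ℕ => (A ^ k).mulVec v) Filter.atTop
        (nhds ((0 : Matrix (Fin d) (Fin d) ℂ).mulVec v)) :=
      ((Continuous.matrix_mulVec continuous_id continuous_const).tendsto 0).comp htend
    rw [Matrix.zero_mulVec] at this
    exact ((continuous_apply j).tendsto 0).comp this
  rw [show (fun k : ℕ => ((A ^ k).mulVec v) j) = fun k => lam ^ k * v j by
    funext k; rw [hpow]; simp] at hcont
  have hnorm := hcont.norm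
  simp only [norm_mul, norm_pow] at hnorm
  have hge : ∀ k : ℕ, ‖v j‖ ≤ ‖lam‖ ^ k * ‖v j‖ := fun k => by
    nlinarith [one_le_pow₀ (a := ‖lam‖) (n := k) (by simpa using hlam), norm_nonneg (v j),
      pow_nonneg (norm_nonneg lam) k]
  have h0 : (0:ℝ) < ‖v j‖ := by simpa using hj
  have hle : ‖v j‖ ≤ ‖(0:ℂ)‖ := ge_of_tendsto' hnorm hge
  simp at hle
  exact absurd hle (by simpa using h0.ne')

theorem stmt_7 (n d : ℕ) (hn : 0 < n) (hd : 0 < d)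
    (φ φ' : Fin n → EuclideanSpace ℝ (Fin d)) (γ : ℝ) (hγ0 : 0 < γ) (hγ1 : γ ≤ 1)
    (h : (1 / γ) * ∑ i : Fin n, ‖φ i‖ ^ 2 ≤ ∑ i : Fin n, ⟪φ i, φ' i⟫)
    (M : Matrix (Fin d) (Fin d) ℝ)
    (hM : M = (Matrix.of fun i j => φ i j)ᵀ *
        (Matrix.of (fun i j => φ i j) - γ • Matrix.of fun i j => φ' i j)) :
    ∀ η : ℝ, 0 < η →
      (¬ Filter.Tendsto
          (fun k : ℕ => ((1 : Matrix (Fin d) (Fin d) ℂ) - (η : ℂ) • M.map (algebraMap ℝ ℂ)) ^ k)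
          Filter.atTop (nhds 0)) ∧
      ¬ ∀ w₀ : Fin d → ℝ,
          Filter.Tendsto
            (fun k : ℕ => (((1 : Matrix (Fin d) (Fin d) ℝ) - η • M) ^ k).mulVec w₀)
            Filter.atTop (nhds 0) := by
  intro η hη
  -- trace M ≤ 0
  have htrM : M.trace ≤ 0 := by
    have hin : ∀ x y : EuclideanSpace ℝ (Fin d), ⟪x, y⟫ = ∑ j, x j * y j := fun x y => by
      simp [PiLp.inner_apply, RCLike.inner_apply, starRingEnd_apply, mul_comm]
    have htr : M.trace = (∑ i, ‖φ i‖ ^ 2) - γ * ∑ i, ⟪φ i, φ' i⟫ := by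
      subst hM
      simp only [Matrix.trace, Matrix.diag, Matrix.mul_apply, Matrix.transpose_apply,
        Matrix.sub_apply, Matrix.smul_apply, Matrix.of_apply, smul_eq_mul]
      rw [Finset.sum_comm, Finset.mul_sum, ← Finset.sum_sub_distrib]
      refine Finset.sum_congr rfl fun i _ => ?_
      have hns : ‖φ i‖ ^ 2 = ⟪φ i, φ i⟫ := (real_inner_self_eq_norm_sq _).symm
      rw [hns, hin, hin, Finset.mul_sum, ← Finset.sum_sub_distrib]
      refine Finset.sum_congr rfl fun j _ => ?_
      ring
    rw [htr]
    have key := mul_le_mul_of_nonneg_left h hγ0.le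
    have heq : γ * (1 / γ * ∑ i, ‖φ i‖ ^ 2) = ∑ i, ‖φ i‖ ^ 2 := by field_simp
    linarith [key, heq]
  set A : Matrix (Fin d) (Fin d) ℂ :=
    (1 : Matrix (Fin d) (Fin d) ℂ) - (η : ℂ) • M.map (algebraMap ℝ ℂ) with hA
  set B : Matrix (Fin d) (Fin d) ℝ := (1 : Matrix (Fin d) (Fin d) ℝ) - η • M with hB
  -- trace of A
  have htrA : A.trace = (d : ℂ) - (η : ℂ) * (M.trace : ℂ) := by
    rw [hA, Matrix.trace_sub, Matrix.trace_smul, Matrix.trace_one]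
    simp only [Matrix.trace, Matrix.diag, Matrix.map_apply, smul_eq_mul,
      Complex.coe_algebraMap, Fintype.card_fin]
    push_cast
    ring
  -- find a root with large real part
  have hroots_sum : A.charpoly.roots.sum = A.trace := (Matrix.trace_eq_sum_roots_charpoly A).symm
  have hcard : Multiset.card A.charpoly.roots = d := by
    rw [(Polynomial.splits_iff_card_roots).1 (IsAlgClosed.splits A.charpoly),
      Matrix.charpoly_natDegree_eq_dim, Fintype.card_fin]
  have hex : ∃ lam ∈ A.charpoly.roots, 1 ≤ lam.re := by
    by_contra hcon
    push_neg at hcon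
    have hne : A.charpoly.roots ≠ 0 := by
      intro h0
      rw [h0] at hcard
      simp at hcard
      omega
    have hlt : ((A.charpoly.roots.map Complex.re).sum : ℝ) <
        ((A.charpoly.roots.map (fun _ => (1:ℝ))).sum) :=
      Multiset.sum_lt_sum_of_nonempty hne hcon
    have h1 : ((A.charpoly.roots.map (fun _ => (1:ℝ))).sum) = (d : ℝ) := by
      rw [Multiset.map_const', Multiset.sum_replicate, hcard]; simp
    have h2 : ((A.charpoly.roots.map Complex.re).sum) = (A.trace).re := by
      rw [← hroots_sum]
      exact (map_multiset_sum Complex.reAddGroupHom A.charpoly.roots).symm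
    rw [h1, h2, htrA] at hlt
    simp only [Complex.sub_re, Complex.natCast_re, Complex.mul_re, Complex.ofReal_re,
      Complex.ofReal_im, Complex.mul_im, mul_zero, zero_mul, sub_zero] at hlt
    nlinarith [mul_nonneg hη.le (neg_nonneg.mpr htrM)]
  obtain ⟨lam, hmem, hre⟩ := hex
  have habs : 1 ≤ ‖lam‖ := le_trans hre (Complex.re_le_norm lam)
  have hroot : A.charpoly.IsRoot lam := Polynomial.isRoot_of_mem_roots hmem
  have hfirst : ¬ Filter.Tendsto (fun k : ℕ => A ^ k) Filter.atTop (nhds 0) :=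
    aux_not_tendsto A lam hroot habs
  refine ⟨hfirst, fun hall => hfirst ?_⟩
  -- from real convergence for all w₀, derive complex matrix power convergence
  have hAB : A = B.map (algebraMap ℝ ℂ) := by
    ext i j
    simp only [hA, hB, Matrix.map_apply, Matrix.sub_apply, Matrix.smul_apply,
      Matrix.one_apply, smul_eq_mul, Complex.coe_algebraMap]
    split_ifs <;> push_cast <;> ring
  have hpowmap : ∀ k : ℕ, A ^ k = (B ^ k).map (algebraMap ℝ ℂ) := fun k => by
    rw [hAB, ← RingHom.mapMatrix_apply, ← map_pow, RingHom.mapMatrix_apply]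
  have hBpow : Filter.Tendsto (fun k : ℕ => B ^ k) Filter.atTop (nhds 0) := by
    refine tendsto_pi_nhds.2 ?_
    intro i
    rw [tendsto_pi_nhds]
    intro j
    have := hall (Pi.single j 1)
    have h2 : Filter.Tendsto (fun k : ℕ => ((B ^ k).mulVec (Pi.single j 1)) i)
        Filter.atTop (nhds 0) := by
      have := ((continuous_apply i).tendsto 0).comp this
      exact this
    simpa [Matrix.mulVec_single] using h2
  refine tendsto_pi_nhds.2 ?_
  intro i
  rw [tendsto_pi_nhds]
  intro j
  have hij : Filter.Tendsto (fun k : ℕ => (B ^ k) i j) Filter.atTop (nhds 0) := by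
    have := ((continuous_apply j).tendsto 0).comp
      (((continuous_apply i).tendsto 0).comp hBpow)
    exact this
  have := (Complex.continuous_ofReal.tendsto 0).comp hij
  show Filter.Tendsto (fun k : ℕ => (A ^ k) i j) Filter.atTop (nhds 0)
  have heq : (fun k : ℕ => (A ^ k) i j) = fun k => ((B ^ k) i j : ℂ) := by
    funext k; rw [hpowmap]; rfl
  rw [heq]
  exact this
end

section
/- (Scalar core of Lemma B.3) Let λ ∈ ℂ with Re(λ) > 0 and let η > 0 satisfy η·|λ|² ≤ Re(λ). Then for every natural number k ≥ 1, |1 − ηλ|^k · |λ| ≤ 2|λ| / (e · k · η · Re(λ)). -/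
theorem stmt_10 (z : ℂ) (hre : 0 < z.re) (η : ℝ) (hη : 0 < η)
    (hstep : η * ‖z‖ ^ 2 ≤ z.re) (k : ℕ) (hk : 1 ≤ k) :
    ‖1 - (η : ℂ) * z‖ ^ k * ‖z‖ ≤
      2 * ‖z‖ / (Real.exp 1 * k * η * z.re) := by
  set x : ℝ := η * z.re with hxdef
  have hx : 0 < x := mul_pos hη hre
  have habsz : (0:ℝ) ≤ ‖z‖ := norm_nonneg z
  -- Step 1: |1 - ηz|^2 ≤ 1 - x
  have hsq : (‖1 - (η : ℂ) * z‖) ^ 2 ≤ 1 - x := by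
    have h1 : (‖1 - (η : ℂ) * z‖) ^ 2
        = 1 - 2 * (η * z.re) + η ^ 2 * ((‖z‖) ^ 2) := by
      rw [Complex.sq_norm, Complex.sq_norm, Complex.normSq_apply, Complex.normSq_apply]
      simp [Complex.sub_re, Complex.sub_im, Complex.mul_re, Complex.mul_im]
      ring
    have h2 : η ^ 2 * ((‖z‖) ^ 2) ≤ η * z.re := by
      have := mul_le_mul_of_nonneg_left hstep (le_of_lt hη)
      calc η ^ 2 * ((‖z‖) ^ 2) = η * (η * ‖z‖ ^ 2) := by ring
        _ ≤ η * z.re := this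
    rw [h1]; linarith
  -- Step 2: |1-ηz| ≤ exp(-x/2)
  have habs : ‖1 - (η : ℂ) * z‖ ≤ Real.exp (-(x/2)) := by
    have hexp : 1 - x ≤ Real.exp (-x) := by
      have := Real.add_one_le_exp (-x); linarith
    have hsq2 : (‖1 - (η : ℂ) * z‖) ^ 2 ≤ (Real.exp (-(x/2))) ^ 2 := by
      rw [← Real.exp_nat_mul]
      have h : ((2:ℕ):ℝ) * (-(x/2)) = -x := by push_cast; ring
      rw [h]
      exact hsq.trans hexp
    exact (pow_le_pow_iff_left₀ (norm_nonneg _) (Real.exp_pos _).le two_ne_zero).mp hsq2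
  -- Step 3: |1-ηz|^k ≤ exp(-k*x/2)
  have hpow : (‖1 - (η : ℂ) * z‖) ^ k ≤ Real.exp (-(k * x / 2)) := by
    calc (‖1 - (η : ℂ) * z‖) ^ k ≤ (Real.exp (-(x/2))) ^ k :=
          pow_le_pow_left₀ (norm_nonneg _) habs k
      _ = Real.exp (-(k * x / 2)) := by
          rw [← Real.exp_nat_mul]; ring_nf
  -- Step 4: exp(-(t)) ≤ 1/(e*t) with t = k*x/2
  have ht : (0:ℝ) < (k : ℝ) * x / 2 := by
    have : (0:ℝ) < (k:ℝ) := by positivity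
    positivity
  have hkey : Real.exp (-(k * x / 2)) ≤ 2 / (Real.exp 1 * k * x) := by
    set t : ℝ := (k : ℝ) * x / 2 with htdef
    have h1 : t ≤ Real.exp (t - 1) := by
      have := Real.add_one_le_exp (t - 1); linarith
    have h2 : Real.exp 1 * t ≤ Real.exp t := by
      have := mul_le_mul_of_nonneg_left h1 (Real.exp_pos 1).le
      rwa [← Real.exp_add, add_sub_cancel] at this
    have h3 : Real.exp (-t) ≤ 1 / (Real.exp 1 * t) := by
      rw [Real.exp_neg, inv_eq_one_div, div_le_div_iff₀ (Real.exp_pos t) (by positivity)]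
      linarith
    calc Real.exp (-(k * x / 2)) = Real.exp (-t) := by rw [htdef]
      _ ≤ 1 / (Real.exp 1 * t) := h3
      _ = 2 / (Real.exp 1 * k * x) := by rw [htdef]; field_simp
  -- conclude
  have hfinal : (‖1 - (η : ℂ) * z‖) ^ k ≤ 2 / (Real.exp 1 * k * x) :=
    hpow.trans hkey
  calc ‖1 - (η : ℂ) * z‖ ^ k * ‖z‖
      ≤ 2 / (Real.exp 1 * k * x) * ‖z‖ :=
        mul_le_mul_of_nonneg_right hfinal habsz
    _ = 2 * ‖z‖ / (Real.exp 1 * k * η * z.re) := by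
        rw [hxdef]; ring
end
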